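/- For the channel P_{W_j|X_j^n} arising from W_j uniform on {±1} and n i.i.d. observations through BSC((1−δ)/2), the Dobrushin coefficient equals (1−β^n)/(1+β^n) with β = (1−δ)/(1+δ): ϑ(P_{W_j|X_j^n}) = (1−β^n)/(1+β^n). -/

import Mathlib

open Finset Real

def IsPMF {α : Type*} [Fintype α] (p : α → ℝ) : Prop :=
  (∀ x, 0 ≤ p x) ∧ ∑ x, p x = 1

noncomputable def KL2 {α : Type*} [Fintype α] (p q : α → ℝ) : ℝ :=
  ∑ x, p x * Real.logb 2 (p x / q x)

noncomputable def MI2 {α β : Type*} [Fintype α] [Fintype β] (p : α × β → ℝ) : ℝ :=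
  ∑ x : α × β, p x * Real.logb 2 (p x / ((∑ b, p (x.1, b)) * (∑ a, p (a, x.2))))

noncomputable def H2 {α : Type*} [Fintype α] (p : α → ℝ) : ℝ :=
  -∑ x, p x * Real.logb 2 (p x)

noncomputable def push {α β : Type*} [Fintype α] (μ : α → ℝ) (K : α → β → ℝ) : β → ℝ :=
  fun y => ∑ x, μ x * K x y

noncomputable def binH (p : ℝ) : ℝ :=
  -(p * Real.logb 2 p) - (1 - p) * Real.logb 2 (1 - p)

noncomputable def etaAt {α β : Type*} [Fintype α] [Fintype β]
    (μ : α → ℝ) (K : α → β → ℝ) : ℝ :=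
  sSup { r | ∃ ν : α → ℝ, IsPMF ν ∧ (∀ x, μ x = 0 → ν x = 0) ∧ 0 < KL2 ν μ ∧
    r = KL2 (push ν K) (push μ K) / KL2 ν μ }

noncomputable def etaCh {α β : Type*} [Fintype α] [Fintype β] (K : α → β → ℝ) : ℝ :=
  sSup { r | ∃ μ ν : α → ℝ, IsPMF μ ∧ IsPMF ν ∧ (∀ x, μ x = 0 → ν x = 0) ∧
    0 < KL2 ν μ ∧ r = KL2 (push ν K) (push μ K) / KL2 ν μ }

noncomputable def capacity2 {U V : Type*} [Fintype U] [Fintype V] (Ch : U → V → ℝ) : ℝ :=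
  sSup { r | ∃ μ : U → ℝ, IsPMF μ ∧ r = MI2 (fun uv : U × V => μ uv.1 * Ch uv.1 uv.2) }

noncomputable def BSC (ε : ℝ) : Bool → Bool → ℝ := fun u v => if v = u then 1 - ε else ε

/-- for W_j uniform on {±1} (modeled as Bool) and n i.i.d. observations
through BSC((1−δ)/2), the Dobrushin coefficient of the posterior kernel equals
(1−β^n)/(1+β^n) with β = (1−δ)/(1+δ). -/
theorem dobrushin_posterior_bsc
    (n : ℕ) (δ : ℝ) (hδ0 : 0 ≤ δ) (hδ1 : δ < 1)
    (β : ℝ) (hβ : β = (1 - δ) / (1 + δ))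
    (like : Bool → Bool → ℝ)
    (hlike : ∀ w x, like w x = if x = w then (1 + δ)/2 else (1 - δ)/2)
    (post : (Fin n → Bool) → Bool → ℝ)
    (hpost : ∀ x w, post x w =
      ((1/2) * ∏ k, like w (x k)) / ∑ w' : Bool, (1/2) * ∏ k, like w' (x k)) :
    Finset.univ.sup' Finset.univ_nonempty
      (fun xp : (Fin n → Bool) × (Fin n → Bool) =>
        (1/2) * ∑ w : Bool, |post xp.1 w - post xp.2 w|) =
      (1 - β^n) / (1 + β^n) := by
  have h1δ : (1:ℝ) + δ ≠ 0 := by linarith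
  have ha : (0:ℝ) < (1 + δ)/2 := by linarith
  have hb : (0:ℝ) < (1 - δ)/2 := by linarith
  set a := (1 + δ)/2 with ha_def
  set b := (1 - δ)/2 with hb_def
  have hba : b ≤ a := by rw [ha_def, hb_def]; linarith
  have han : (0:ℝ) < a^n := pow_pos ha n
  have hbn : (0:ℝ) < b^n := pow_pos hb n
  have hban : b^n ≤ a^n := pow_le_pow_left₀ hb.le hba n
  have hSn : (0:ℝ) < a^n + b^n := by linarith
  -- basic facts about products
  have prodpos : ∀ (x : Fin n → Bool) (w : Bool), 0 < ∏ k, like w (x k) := by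
    intro x w
    apply Finset.prod_pos
    intro k _
    rw [hlike]
    split_ifs
    · exact ha
    · exact hb
  have prodle : ∀ (x : Fin n → Bool) (w : Bool), ∏ k, like w (x k) ≤ a^n := by
    intro x w
    calc ∏ k, like w (x k) ≤ ∏ _k : Fin n, a := by
          apply Finset.prod_le_prod
          · intro k _; rw [hlike]; split_ifs; exacts [ha.le, hb.le]
          · intro k _; rw [hlike]; split_ifs; exacts [le_refl a, hba]
      _ = a^n := by rw [Finset.prod_const, Finset.card_univ, Fintype.card_fin]
  have prodmul : ∀ x : Fin n → Bool,
      (∏ k, like true (x k)) * (∏ k, like false (x k)) = a^n * b^n := by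
    intro x
    rw [← Finset.prod_mul_distrib]
    have h : ∀ k ∈ Finset.univ, like true (x k) * like false (x k) = a * b := by
      intro k _
      rw [hlike, hlike]
      cases x k <;> simp [mul_comm]
    rw [Finset.prod_congr rfl h, Finset.prod_const, Finset.card_univ, Fintype.card_fin,
      mul_pow]
  -- cross inequalities
  have cross : ∀ x : Fin n → Bool,
      (∏ k, like true (x k)) * b^n ≤ a^n * (∏ k, like false (x k)) := by
    intro x
    have h1 := prodle x true
    have h2 := prodmul x
    have h3 := prodpos x true
    nlinarith [mul_nonneg hbn.le (mul_nonneg (sub_nonneg.mpr h1)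
      (add_pos han h3).le)]
  have cross' : ∀ x : Fin n → Bool,
      (∏ k, like false (x k)) * b^n ≤ a^n * (∏ k, like true (x k)) := by
    intro x
    have h1 := prodle x false
    have h2 := prodmul x
    have h3 := prodpos x false
    nlinarith [mul_nonneg hbn.le (mul_nonneg (sub_nonneg.mpr h1)
      (add_pos han h3).le)]
  -- posterior formulas
  have hpt : ∀ x : Fin n → Bool, post x true =
      (∏ k, like true (x k)) / ((∏ k, like true (x k)) + (∏ k, like false (x k))) := by
    intro x
    rw [hpost, Fintype.sum_bool,
      show (1/2:ℝ) * ∏ k, like true (x k) + (1/2) * ∏ k, like false (x k)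
        = (1/2) * ((∏ k, like true (x k)) + ∏ k, like false (x k)) by ring,
      mul_div_mul_left _ _ (by norm_num : (1/2:ℝ) ≠ 0)]
  have hpf : ∀ x : Fin n → Bool, post x false =
      (∏ k, like false (x k)) / ((∏ k, like true (x k)) + (∏ k, like false (x k))) := by
    intro x
    rw [hpost, Fintype.sum_bool,
      show (1/2:ℝ) * ∏ k, like true (x k) + (1/2) * ∏ k, like false (x k)
        = (1/2) * ((∏ k, like true (x k)) + ∏ k, like false (x k)) by ring,
      mul_div_mul_left _ _ (by norm_num : (1/2:ℝ) ≠ 0)]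
  have hsum1 : ∀ x : Fin n → Bool, post x true + post x false = 1 := by
    intro x
    rw [hpt x, hpf x, ← add_div, div_self
      (add_pos (prodpos x true) (prodpos x false)).ne']
  -- bounds on the posterior of `true`
  have phi : ∀ x : Fin n → Bool, post x true ≤ a^n/(a^n + b^n) := by
    intro x
    rw [hpt x, div_le_div_iff₀ (add_pos (prodpos x true) (prodpos x false)) hSn]
    nlinarith [cross x]
  have plo : ∀ x : Fin n → Bool, b^n/(a^n + b^n) ≤ post x true := by
    intro x
    rw [hpt x, div_le_div_iff₀ hSn (add_pos (prodpos x true) (prodpos x false))]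
    nlinarith [cross' x]
  -- rewrite the target constant
  have hβ' : β = b / a := by
    rw [hβ, ha_def, hb_def]
    field_simp
  have hT : (1 - β^n)/(1 + β^n) = (a^n - b^n)/(a^n + b^n) := by
    rw [hβ', div_pow, div_eq_div_iff (by positivity) hSn.ne']
    field_simp
  rw [hT]
  apply le_antisymm
  · apply Finset.sup'_le
    intro xp _
    have f1 : post xp.1 false = 1 - post xp.1 true := by linarith [hsum1 xp.1]
    have f2 : post xp.2 false = 1 - post xp.2 true := by linarith [hsum1 xp.2]
    have b1 := plo xp.1; have b2 := phi xp.1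
    have b3 := plo xp.2; have b4 := phi xp.2
    simp only [Fintype.sum_bool, f1, f2]
    have e1 : (1 - post xp.1 true) - (1 - post xp.2 true)
        = -(post xp.1 true - post xp.2 true) := by ring
    rw [e1, abs_neg,
      show (1/2:ℝ) * (|post xp.1 true - post xp.2 true| + |post xp.1 true - post xp.2 true|)
        = |post xp.1 true - post xp.2 true| by ring,
      show (a^n - b^n)/(a^n + b^n) = a^n/(a^n+b^n) - b^n/(a^n+b^n) by rw [sub_div]]
    rw [abs_sub_le_iff]
    constructor <;> linarith
  · have hmem : ((fun _ => true, fun _ => false) : (Fin n → Bool) × (Fin n → Bool))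
        ∈ (Finset.univ : Finset ((Fin n → Bool) × (Fin n → Bool))) := Finset.mem_univ _
    refine le_trans ?_ (Finset.le_sup' _ hmem)
    have c1 : ∏ k : Fin n, like true ((fun _ => true) k) = a^n := by
      simp only [hlike]
      simp [Finset.prod_const, Finset.card_univ, Fintype.card_fin]
    have c2 : ∏ k : Fin n, like false ((fun _ => true) k) = b^n := by
      simp only [hlike]
      simp [Finset.prod_const, Finset.card_univ, Fintype.card_fin]
    have c3 : ∏ k : Fin n, like true ((fun _ => false) k) = b^n := by
      simp only [hlike]
      simp [Finset.prod_const, Finset.card_univ, Fintype.card_fin]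
    have c4 : ∏ k : Fin n, like false ((fun _ => false) k) = a^n := by
      simp only [hlike]
      simp [Finset.prod_const, Finset.card_univ, Fintype.card_fin]
    have p1 : post (fun _ => true) true = a^n/(a^n + b^n) := by
      rw [hpt, c1, c2]
    have p2 : post (fun _ => false) true = b^n/(a^n + b^n) := by
      rw [hpt, c3, c4, add_comm]
    have q1 : post (fun _ => true) false = b^n/(a^n + b^n) := by
      rw [hpf, c1, c2]
    have q2 : post (fun _ => false) false = a^n/(a^n + b^n) := by
      rw [hpf, c3, c4, add_comm]
    simp only [Fintype.sum_bool, p1, p2, q1, q2]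
    rw [show a^n/(a^n+b^n) - b^n/(a^n+b^n) = (a^n - b^n)/(a^n+b^n) by rw [sub_div],
      show b^n/(a^n+b^n) - a^n/(a^n+b^n) = -((a^n - b^n)/(a^n+b^n)) by rw [sub_div]; ring,
      abs_neg, abs_of_nonneg (div_nonneg (by linarith) hSn.le)]
    linarith
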